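/- Let Φ be a semi-coherent structure function on n ≥ 1 components with structural signature s, let T_1,…,T_n be i.i.d. exponential random variables with rate μ > 0, let T_fail := inf{ t ≥ 0 : Φ(1{T_1 > t},…,1{T_n > t}) = 0 }, and let T_{r:n} be the r-th order statistic of T_1,…,T_n. Then for every r ∈ {1,…,n}, P( T_fail ≤ T_{r:n} ) = Σ_{k=1}^{r} s_k. Equivalently, under the r-out-of-n:R repair policy whose first repair time is T_rep := min{T_fail, T_{r:n}}, the probability p^{(r)} that the first repair is due to a system failure equals Σ_{k=1}^{r} s_k. -/

import Mathlib

open MeasureTheory ProbabilityTheory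

/-- `S̄ k`: the proportion of states with exactly `k` failed components in which
the system works. -/
noncomputable def Sbar (n : ℕ) (Φ : (Fin n → Bool) → Bool) (k : ℕ) : ℝ :=
  ((Finset.univ.filter (fun x : Fin n → Bool =>
      (Finset.univ.filter (fun i => x i = false)).card = k ∧ Φ x = true)).card : ℝ) /
    (n.choose k : ℝ)

/-- The structural signature `s k = S̄_{k-1} - S̄_k`. -/
noncomputable def structSig (n : ℕ) (Φ : (Fin n → Bool) → Bool) (k : ℕ) : ℝ :=
  Sbar n Φ (k - 1) - Sbar n Φ k

/-- The `k`-th order statistic (`k : Fin n`, 0-based) of a tuple `x : Fin n → ℝ`. -/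
noncomputable def orderStat (n : ℕ) (x : Fin n → ℝ) (k : Fin n) : ℝ :=
  x (Tuple.sort x k)

/-- The system failure time: the first nonnegative time at which the structure
function evaluated at the vector of component states (component `i` works at time `t`
iff `t < x i`) is `0`. -/
noncomputable def failTime (n : ℕ) (Φ : (Fin n → Bool) → Bool) (x : Fin n → ℝ) : ℝ :=
  sInf {t : ℝ | 0 ≤ t ∧ Φ (fun i => decide (t < x i)) = false}

open scoped ENNReal NNReal

section Det

variable {n : ℕ} {Φ : (Fin n → Bool) → Bool}

lemma phi_false_mono (hmono : ∀ x y : Fin n → Bool, (∀ i, x i ≤ y i) → Φ x ≤ Φ y)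
    {y : Fin n → ℝ} {t t' : ℝ} (h : t ≤ t')
    (ht : Φ (fun i => decide (t < y i)) = false) :
    Φ (fun i => decide (t' < y i)) = false := by
  have hle := hmono (fun i => decide (t' < y i)) (fun i => decide (t < y i)) (by
    intro i
    by_cases hi : t' < y i
    · simp [hi, lt_of_le_of_lt h hi]
    · simp [hi])
  rw [ht] at hle
  cases hb : Φ (fun i => decide (t' < y i))
  · rfl
  · rw [hb] at hle; exact absurd hle (by decide)

lemma failTime_le_iff (hmono : ∀ x y : Fin n → Bool, (∀ i, x i ≤ y i) → Φ x ≤ Φ y)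
    (hΦ0 : Φ (fun _ => false) = false) (hn : 1 ≤ n)
    (y : Fin n → ℝ) {v : ℝ} (hv : 0 ≤ v) :
    failTime n Φ y ≤ v ↔ Φ (fun i => decide (v < y i)) = false := by
  classical
  have hne0 : Nonempty (Fin n) := ⟨⟨0, hn⟩⟩
  set S : Set ℝ := {t : ℝ | 0 ≤ t ∧ Φ (fun i => decide (t < y i)) = false} with hSdef
  have hbdd : BddBelow S := ⟨0, fun t ht => ht.1⟩
  obtain ⟨M, hM0, hMy⟩ : ∃ M : ℝ, 0 ≤ M ∧ ∀ i, y i ≤ M :=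
    ⟨max 0 (Finset.univ.sup' Finset.univ_nonempty y), le_max_left _ _,
      fun i => le_max_of_le_right (Finset.le_sup' y (Finset.mem_univ i))⟩
  have hMS : M ∈ S := by
    refine ⟨hM0, ?_⟩
    have hst : (fun i => decide (M < y i)) = fun _ => false := by
      funext i; simp [not_lt.mpr (hMy i)]
    rw [hst, hΦ0]
  have hne : S.Nonempty := ⟨M, hMS⟩
  have hfT : failTime n Φ y = sInf S := rfl
  have ha0 : 0 ≤ sInf S := le_csInf hne fun t ht => ht.1
  have haS : sInf S ∈ S := by
    set a := sInf S with ha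
    obtain ⟨b, hab, hby⟩ : ∃ b, a < b ∧ ∀ i, a < y i → b ≤ y i := by
      rcases (Finset.univ.filter (fun i => a < y i)).eq_empty_or_nonempty with hF | hF
      · have h' := Finset.filter_eq_empty_iff.mp hF
        exact ⟨a + 1, by linarith, fun i hi => absurd hi (h' (Finset.mem_univ i))⟩
      · refine ⟨(Finset.univ.filter (fun i => a < y i)).inf' hF y, ?_, ?_⟩
        · rw [Finset.lt_inf'_iff]
          intro i hi; exact (Finset.mem_filter.mp hi).2
        · intro i hi
          exact Finset.inf'_le y (Finset.mem_filter.mpr ⟨Finset.mem_univ i, hi⟩)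
    obtain ⟨t, htS, htb⟩ := exists_lt_of_csInf_lt hne hab
    have hat : a ≤ t := csInf_le hbdd htS
    have hstate : (fun i => decide (a < y i)) = (fun i => decide (t < y i)) := by
      funext i
      by_cases hi : a < y i
      · simp [hi, lt_of_lt_of_le htb (hby i hi)]
      · have h1 : y i ≤ a := not_lt.mp hi
        simp [hi, not_lt.mpr (h1.trans hat)]
    exact ⟨ha0, by rw [hstate]; exact htS.2⟩
  rw [hfT]
  constructor
  · intro h
    exact phi_false_mono hmono h haS.2
  · intro h
    exact csInf_le hbdd ⟨hv, h⟩

lemma exists_sep {r : ℕ} (hr1 : 1 ≤ r) (hrn : r ≤ n) {y : Fin n → ℝ}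
    (hinj : Function.Injective y) :
    ∃ A : Finset (Fin n), A.card = r ∧ (∀ i ∈ A, ∀ j ∉ A, y i < y j) ∧
      ∀ i, i ∈ A ↔ y i ≤ orderStat n y ⟨r - 1, by have := hinj; omega⟩ := by
  classical
  set σ := Tuple.sort y with hσ
  have hsm : StrictMono (y ∘ σ) :=
    (Tuple.monotone_sort y).strictMono_of_injective (hinj.comp σ.injective)
  set j : Fin n := ⟨r - 1, by have := hinj; omega⟩ with hj
  have hmem : ∀ i, i ∈ Finset.image σ (Finset.Iic j) ↔ y i ≤ orderStat n y j := by
    intro i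
    constructor
    · intro hmem
      obtain ⟨k, hk, rfl⟩ := Finset.mem_image.mp hmem
      exact hsm.monotone (Finset.mem_Iic.mp hk)
    · intro hle
      have h1 : y (σ (σ.symm i)) ≤ (y ∘ σ) j := by
        rw [Equiv.apply_symm_apply]; exact hle
      have hk : σ.symm i ≤ j := hsm.le_iff_le.mp h1
      exact Finset.mem_image.mpr ⟨σ.symm i, Finset.mem_Iic.mpr hk,
        Equiv.apply_symm_apply σ i⟩
  refine ⟨Finset.image σ (Finset.Iic j), ?_, ?_, hmem⟩
  · rw [Finset.card_image_of_injective _ σ.injective, Fin.card_Iic]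
    simp only [hj]
    omega
  · intro i hi k hk
    have h1 : y i ≤ orderStat n y j := (hmem i).mp hi
    have h2 : ¬ y k ≤ orderStat n y j := fun hc => hk ((hmem k).mpr hc)
    exact lt_of_le_of_lt h1 (lt_of_not_ge h2)

lemma sep_unique {y : Fin n → ℝ} {A B : Finset (Fin n)}
    (hA : ∀ i ∈ A, ∀ j ∉ A, y i < y j) (hB : ∀ i ∈ B, ∀ j ∉ B, y i < y j)
    (hcard : A.card = B.card) : A = B := by
  by_contra hne
  have h1 : (A \ B).Nonempty := by
    rw [Finset.sdiff_nonempty]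
    intro hsub
    exact hne (Finset.eq_of_subset_of_card_le hsub (le_of_eq hcard.symm))
  have h2 : (B \ A).Nonempty := by
    rw [Finset.sdiff_nonempty]
    intro hsub
    exact hne (Finset.eq_of_subset_of_card_le hsub (le_of_eq hcard)).symm
  obtain ⟨i, hi⟩ := h1
  obtain ⟨k, hk⟩ := h2
  rw [Finset.mem_sdiff] at hi hk
  exact absurd (hA i hi.1 k hk.2) (not_lt.mpr (hB k hk.1 i hi.2).le)

end Det

section Count
variable {n : ℕ} {Φ : (Fin n → Bool) → Bool}

lemma Sbar_zero (hn : 1 ≤ n) (hΦ1 : Φ (fun _ => true) = true) : Sbar n Φ 0 = 1 := by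
  unfold Sbar
  have hset : (Finset.univ.filter (fun x : Fin n → Bool =>
      (Finset.univ.filter (fun i => x i = false)).card = 0 ∧ Φ x = true)) = {fun _ => true} := by
    ext x
    simp only [Finset.mem_filter, Finset.mem_univ, true_and, Finset.mem_singleton,
      Finset.card_eq_zero, Finset.filter_eq_empty_iff]
    constructor
    · rintro ⟨h, _⟩
      funext i
      have := @h i trivial
      simpa using this
    · rintro rfl
      exact ⟨fun i _ => by simp, hΦ1⟩
  rw [hset]
  simp

lemma card_states_eq (r : ℕ) (b : Bool) [DecidablePred fun x : Fin n → Bool => (Finset.univ.filter (fun i => x i = false)).card = r ∧ Φ x = true] :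
    (Finset.univ.filter (fun x : Fin n → Bool =>
        (Finset.univ.filter (fun i => x i = false)).card = r ∧ Φ x = b)).card =
      ((Finset.powersetCard r (Finset.univ : Finset (Fin n))).filter
        (fun A => Φ (fun i => decide (i ∉ A)) = b)).card := by
  classical
  refine Finset.card_bij' (fun x _ => Finset.univ.filter (fun i => x i = false))
    (fun A _ => fun i => decide (i ∉ A)) ?_ ?_ ?_ ?_
  · intro x hx
    rw [Finset.mem_filter] at hx ⊢
    refine ⟨Finset.mem_powersetCard.mpr ⟨Finset.subset_univ _, hx.2.1⟩, ?_⟩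
    have hfx : (fun i => decide (i ∉ Finset.univ.filter (fun i => x i = false))) = x := by
      funext i
      rcases Bool.eq_false_or_eq_true (x i) with h | h <;> simp [h]
    rw [hfx]; exact hx.2.2
  · intro A hA
    rw [Finset.mem_filter] at hA ⊢
    refine ⟨Finset.mem_univ _, ?_, hA.2⟩
    have : (Finset.univ.filter (fun i => (decide (i ∉ A) : Bool) = false)) = A := by
      ext i; simp
    rw [this]
    exact (Finset.mem_powersetCard.mp hA.1).2
  · intro x hx
    funext i
    rcases Bool.eq_false_or_eq_true (x i) with h | h <;> simp [h]
  · intro A hA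
    ext i; simp

lemma Sbar_eq (r : ℕ) :
    Sbar n Φ r = (((Finset.powersetCard r (Finset.univ : Finset (Fin n))).filter
        (fun A => Φ (fun i => decide (i ∉ A)) = true)).card : ℝ) / (n.choose r : ℝ) := by
  unfold Sbar
  rw [card_states_eq r true]

lemma sum_structSig (r : ℕ) (hr1 : 1 ≤ r) :
    ∑ k ∈ Finset.Icc 1 r, structSig n Φ k = Sbar n Φ 0 - Sbar n Φ r := by
  rw [← Finset.Ico_add_one_right_eq_Icc, Finset.sum_Ico_eq_sum_range]
  have h1 : r + 1 - 1 = r := by omega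
  rw [h1]
  have h2 : ∀ i ∈ Finset.range r, structSig n Φ (1 + i) =
      Sbar n Φ i - Sbar n Φ (i + 1) := by
    intro i _
    unfold structSig
    congr 1
    · congr 1; omega
    · congr 1; omega
  rw [Finset.sum_congr rfl h2]
  exact Finset.sum_range_sub' (fun i => Sbar n Φ i) r

end Count



section Prob
variable {Ω : Type*} [MeasurableSpace Ω] (Pr : Measure Ω) [IsProbabilityMeasure Pr]

lemma survival_map {T : Ω → ℝ} (hT : Measurable T) {μ : ℝ}
    (hexp : ∀ t : ℝ, 0 ≤ t → Pr {ω | t < T ω} = ENNReal.ofReal (Real.exp (-μ * t)))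
    (t : ℝ) : Pr.map T (Set.Ioi t) = ENNReal.ofReal (Real.exp (-μ * max t 0)) := by
  rw [Measure.map_apply hT measurableSet_Ioi]
  have hpre : T ⁻¹' Set.Ioi t = {ω | t < T ω} := rfl
  rcases le_or_gt 0 t with h | h
  · rw [hpre, hexp t h, max_eq_left h]
  · rw [max_eq_right h.le]
    have h1 : Pr {ω | (0:ℝ) < T ω} = 1 := by rw [hexp 0 le_rfl]; simp
    have hsub : {ω | (0:ℝ) < T ω} ⊆ T ⁻¹' Set.Ioi t := fun ω hω => lt_trans h hω
    have h2 := measure_mono (μ := Pr) hsub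
    rw [h1] at h2
    have h3 := prob_le_one (μ := Pr) (s := T ⁻¹' Set.Ioi t)
    rw [le_antisymm h3 h2]
    simp

lemma map_T_eq {T T' : Ω → ℝ} (hT : Measurable T) (hT' : Measurable T') {μ : ℝ}
    (hexp : ∀ t : ℝ, 0 ≤ t → Pr {ω | t < T ω} = ENNReal.ofReal (Real.exp (-μ * t)))
    (hexp' : ∀ t : ℝ, 0 ≤ t → Pr {ω | t < T' ω} = ENNReal.ofReal (Real.exp (-μ * t))) :
    Pr.map T = Pr.map T' := by
  haveI h1 : IsProbabilityMeasure (Pr.map T) := Measure.isProbabilityMeasure_map hT.aemeasurable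
  haveI h2 : IsProbabilityMeasure (Pr.map T') := Measure.isProbabilityMeasure_map hT'.aemeasurable
  refine MeasureTheory.ext_of_generate_finite (Set.range Set.Ioi)
    (BorelSpace.measurable_eq.trans (borel_eq_generateFrom_Ioi ℝ)) isPiSystem_Ioi ?_ ?_
  · rintro s ⟨t, rfl⟩
    rw [survival_map Pr hT hexp t, survival_map Pr hT' hexp' t]
  · rw [measure_univ, measure_univ]

lemma map_T_noatom {T : Ω → ℝ} (hT : Measurable T) {μ : ℝ} (hμ : 0 < μ)
    (hexp : ∀ t : ℝ, 0 ≤ t → Pr {ω | t < T ω} = ENNReal.ofReal (Real.exp (-μ * t)))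
    (x : ℝ) : Pr.map T {x} = 0 := by
  haveI : IsProbabilityMeasure (Pr.map T) := Measure.isProbabilityMeasure_map hT.aemeasurable
  set ν := Pr.map T with hν
  have hIoi : ∀ t, ν (Set.Ioi t) = ENNReal.ofReal (Real.exp (-μ * max t 0)) :=
    survival_map Pr hT hexp
  rcases le_or_gt x 0 with hx | hx
  · have hIic : ν (Set.Iic 0) = 0 := by
      have hc := measure_compl (μ := ν) measurableSet_Ioi (measure_ne_top ν (Set.Ioi 0))
      rw [Set.compl_Ioi] at hc
      rw [hc, measure_univ, hIoi 0]
      simp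
    refine measure_mono_null ?_ hIic
    intro z hz
    rw [Set.mem_singleton_iff] at hz
    rw [hz]
    exact hx
  · have key : ∀ t ∈ Set.Ioo (0:ℝ) x, ν {x} ≤
        ENNReal.ofReal (Real.exp (-μ * t)) - ENNReal.ofReal (Real.exp (-μ * x)) := by
      intro t ht
      have hsub : Set.Ioi x ⊆ Set.Ioi t := Set.Ioi_subset_Ioi ht.2.le
      have hdiff : ν (Set.Ioi t \ Set.Ioi x) = ν (Set.Ioi t) - ν (Set.Ioi x) :=
        measure_diff hsub measurableSet_Ioi.nullMeasurableSet (measure_ne_top ν _)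
      have hmem : {x} ⊆ Set.Ioi t \ Set.Ioi x := by
        intro z hz
        rw [Set.mem_singleton_iff] at hz
        subst hz
        exact ⟨ht.2, by simp⟩
      calc ν {x} ≤ ν (Set.Ioi t \ Set.Ioi x) := measure_mono hmem
        _ = _ := by
            rw [hdiff, hIoi t, hIoi x, max_eq_left ht.1.le, max_eq_left hx.le]
    have htend : Filter.Tendsto
        (fun t : ℝ => ENNReal.ofReal (Real.exp (-μ * t)) - ENNReal.ofReal (Real.exp (-μ * x)))
        (nhdsWithin x (Set.Iio x)) (nhds 0) := by
      have hc : Continuous fun t : ℝ => ENNReal.ofReal (Real.exp (-μ * t)) :=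
        ENNReal.continuous_ofReal.comp (Real.continuous_exp.comp (by continuity))
      have h1 : Filter.Tendsto (fun t : ℝ => ENNReal.ofReal (Real.exp (-μ * t)))
          (nhdsWithin x (Set.Iio x)) (nhds (ENNReal.ofReal (Real.exp (-μ * x)))) :=
        (hc.tendsto x).mono_left nhdsWithin_le_nhds
      have h2 := ENNReal.Tendsto.sub h1 (tendsto_const_nhds
        (x := ENNReal.ofReal (Real.exp (-μ * x))) (f := nhdsWithin x (Set.Iio x)))
        (Or.inl ENNReal.ofReal_ne_top)
      simpa using h2
    have hb : ν {x} ≤ 0 := by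
      refine ge_of_tendsto htend ?_
      have hmem : Set.Ioo (0:ℝ) x ∈ nhdsWithin x (Set.Iio x) := by
        rw [← Set.Ioi_inter_Iio]
        exact Filter.inter_mem (mem_nhdsWithin_of_mem_nhds (Ioi_mem_nhds hx))
          self_mem_nhdsWithin
      exact Filter.eventually_of_mem hmem key
    simpa using hb

lemma joint_eq_pi {n : ℕ} (T : Fin n → Ω → ℝ) (hmeas : ∀ i, Measurable (T i))
    (hindep : iIndepFun T Pr) :
    Pr.map (fun ω (i : Fin n) => T i ω) = Measure.pi (fun i => Pr.map (T i)) := by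
  haveI : ∀ i, IsProbabilityMeasure (Pr.map (T i)) := fun i =>
    Measure.isProbabilityMeasure_map (hmeas i).aemeasurable
  symm
  apply Measure.pi_eq
  intro s hs
  rw [Measure.map_apply (measurable_pi_lambda _ hmeas) (MeasurableSet.univ_pi hs)]
  have hpre : (fun ω (i : Fin n) => T i ω) ⁻¹' (Set.pi Set.univ s) =
      ⋂ i ∈ Finset.univ, T i ⁻¹' s i := by
    ext ω
    simp [Set.mem_pi]
  rw [hpre, hindep.measure_inter_preimage_eq_mul Finset.univ (fun i _ => hs i)]
  exact Finset.prod_congr rfl fun i _ => (Measure.map_apply (hmeas i) (hs i)).symm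

lemma sep_measurable {n : ℕ} (A : Finset (Fin n)) :
    MeasurableSet {y : Fin n → ℝ | ∀ i ∈ A, ∀ j ∉ A, y i < y j} := by
  have hset : {y : Fin n → ℝ | ∀ i ∈ A, ∀ j ∉ A, y i < y j} =
      ⋂ i, ⋂ j, {y : Fin n → ℝ | i ∈ A → j ∉ A → y i < y j} := by
    ext y
    simp only [Set.mem_iInter, Set.mem_setOf_eq]
    tauto
  rw [hset]
  refine MeasurableSet.iInter fun i => MeasurableSet.iInter fun j => ?_
  by_cases hi : i ∈ A
  · by_cases hj : j ∉ A
    · have : {y : Fin n → ℝ | i ∈ A → j ∉ A → y i < y j} = {y | y i < y j} := by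
        ext y; simp [hi, hj]
      rw [this]
      exact measurableSet_lt (measurable_pi_apply i) (measurable_pi_apply j)
    · have : {y : Fin n → ℝ | i ∈ A → j ∉ A → y i < y j} = Set.univ := by
        ext y; simp [hi, hj]
      rw [this]; exact MeasurableSet.univ
  · have : {y : Fin n → ℝ | i ∈ A → j ∉ A → y i < y j} = Set.univ := by
      ext y; simp [hi]
    rw [this]; exact MeasurableSet.univ

lemma pi_measure_sep_eq {n : ℕ} (ν : Measure ℝ) [IsProbabilityMeasure ν]
    (A B : Finset (Fin n)) (hcard : A.card = B.card) :
    Measure.pi (fun _ : Fin n => ν) {y | ∀ i ∈ A, ∀ j ∉ A, y i < y j} =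
    Measure.pi (fun _ : Fin n => ν) {y | ∀ i ∈ B, ∀ j ∉ B, y i < y j} := by
  classical
  obtain ⟨σ, hσ⟩ : ∃ σ : Equiv.Perm (Fin n), ∀ i, i ∈ A ↔ σ i ∈ B := by
    have hc1 : Fintype.card {i // i ∈ A} = Fintype.card {i // i ∈ B} := by
      simp only [Fintype.card_coe, hcard]
    have hc2 : Fintype.card {i // i ∉ A} = Fintype.card {i // i ∉ B} := by
      rw [Fintype.card_subtype_compl, Fintype.card_subtype_compl]
      simp only [Fintype.card_coe, hcard]
    have e1 : {i // i ∈ A} ≃ {i // i ∈ B} := Fintype.equivOfCardEq hc1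
    have e2 : {i // i ∉ A} ≃ {i // i ∉ B} := Fintype.equivOfCardEq hc2
    refine ⟨Equiv.subtypeCongr e1 e2, fun i => ?_⟩
    constructor
    · intro hi
      have hval : Equiv.subtypeCongr e1 e2 i = (e1 ⟨i, hi⟩ : Fin n) := by
        simp [Equiv.subtypeCongr, Equiv.sumCompl_symm_apply_of_pos hi]
      rw [hval]
      exact (e1 ⟨i, hi⟩).2
    · intro hB
      by_contra hi
      have hval : Equiv.subtypeCongr e1 e2 i = (e2 ⟨i, hi⟩ : Fin n) := by
        simp [Equiv.subtypeCongr, Equiv.sumCompl_symm_apply_of_neg hi]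
      rw [hval] at hB
      exact (e2 ⟨i, hi⟩).2 hB
  have hmp := MeasureTheory.measurePreserving_piCongrLeft (fun _ : Fin n => ν) σ
  set f := MeasurableEquiv.piCongrLeft (fun _ : Fin n => ℝ) σ with hf
  have hfy : ∀ (y : Fin n → ℝ) (a : Fin n), f y (σ a) = y a := fun y a =>
    MeasurableEquiv.piCongrLeft_apply_apply (β := fun _ : Fin n => ℝ) σ y a
  have hpre : f ⁻¹' {y : Fin n → ℝ | ∀ i ∈ B, ∀ j ∉ B, y i < y j} =
      {y : Fin n → ℝ | ∀ i ∈ A, ∀ j ∉ A, y i < y j} := by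
    ext y
    simp only [Set.mem_preimage, Set.mem_setOf_eq]
    constructor
    · intro h a ha b hb
      have h1 := h (σ a) ((hσ a).mp ha) (σ b) (fun hc => hb ((hσ b).mpr hc))
      rwa [hfy, hfy] at h1
    · intro h i hi j hj
      have hi' : σ (σ.symm i) ∈ B := by rwa [Equiv.apply_symm_apply]
      have hj' : σ (σ.symm j) ∉ B := by rwa [Equiv.apply_symm_apply]
      have h1 := h (σ.symm i) ((hσ _).mpr hi') (σ.symm j) (fun hc => hj' ((hσ _).mp hc))
      calc f y i = f y (σ (σ.symm i)) := by rw [Equiv.apply_symm_apply]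
        _ = y (σ.symm i) := hfy y _
        _ < y (σ.symm j) := h1
        _ = f y (σ (σ.symm j)) := (hfy y _).symm
        _ = f y j := by rw [Equiv.apply_symm_apply]
  have := hmp.measure_preimage (sep_measurable B).nullMeasurableSet
  rw [hpre] at this
  exact this
end Prob



/-- Under the `r`-out-of-`n`:R repair policy of a semi-coherent system with i.i.d.
exponential component lifetimes, the probability that the first repair is due to a
system failure is `P(T_fail ≤ T_{r:n}) = Σ_{k=1}^{r} s_k`. -/
theorem stmt13 {Ω : Type*} [MeasurableSpace Ω] (Pr : Measure Ω) [IsProbabilityMeasure Pr]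
    (n : ℕ) (hn : 1 ≤ n) (Φ : (Fin n → Bool) → Bool)
    (hmono : ∀ x y : Fin n → Bool, (∀ i, x i ≤ y i) → Φ x ≤ Φ y)
    (hΦ0 : Φ (fun _ => false) = false) (hΦ1 : Φ (fun _ => true) = true)
    (μ : ℝ) (hμ : 0 < μ)
    (T : Fin n → Ω → ℝ)
    (hmeas : ∀ i, Measurable (T i))
    (hindep : iIndepFun T Pr)
    (hexp : ∀ (i : Fin n) (t : ℝ), 0 ≤ t →
      Pr {ω | t < T i ω} = ENNReal.ofReal (Real.exp (-μ * t)))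
    (r : ℕ) (hr1 : 1 ≤ r) (hrn : r ≤ n) :
    (Pr {ω | failTime n Φ (fun i => T i ω) ≤
        orderStat n (fun i => T i ω) ⟨r - 1, by omega⟩}).toReal =
      ∑ k ∈ Finset.Icc 1 r, structSig n Φ k := by
  classical
  set ν : Measure ℝ := Pr.map (T ⟨0, by omega⟩) with hνdef
  haveI hνprob : IsProbabilityMeasure ν := Measure.isProbabilityMeasure_map (hmeas _).aemeasurable
  have hmapeq : ∀ i, Pr.map (T i) = ν := fun i =>
    map_T_eq Pr (hmeas i) (hmeas _) (hexp i) (hexp _)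
  have hjoint : Pr.map (fun ω (i : Fin n) => T i ω) = Measure.pi (fun _ : Fin n => ν) := by
    rw [joint_eq_pi Pr T hmeas hindep]
    congr 1
    exact funext hmapeq
  set J : Ω → (Fin n → ℝ) := fun ω i => T i ω with hJ
  have hJmeas : Measurable J := measurable_pi_lambda _ hmeas
  set D : Finset (Fin n) → Set (Fin n → ℝ) :=
    fun A => {y | ∀ i ∈ A, ∀ j ∉ A, y i < y j} with hD
  have hDmeas : ∀ A, MeasurableSet (D A) := sep_measurable
  have hPrD : ∀ A : Finset (Fin n),
      Pr (J ⁻¹' D A) = Measure.pi (fun _ : Fin n => ν) (D A) := fun A => by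
    rw [← hjoint, Measure.map_apply hJmeas (hDmeas A)]
  set P := Finset.powersetCard r (Finset.univ : Finset (Fin n)) with hP
  have hPcard : P.card = n.choose r := by
    rw [hP, Finset.card_powersetCard, Finset.card_univ, Fintype.card_fin]
  have hcardP : ∀ A ∈ P, A.card = r := fun A hA => (Finset.mem_powersetCard.mp hA).2
  have hdisj : (↑P : Set (Finset (Fin n))).PairwiseDisjoint (fun A => J ⁻¹' D A) := by
    intro A hA B hB hAB
    rw [Function.onFun, Set.disjoint_left]
    rintro ω hωA hωB
    exact hAB (sep_unique hωA hωB (by rw [hcardP A hA, hcardP B hB]))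
  -- null sets
  have hEqNull : ∀ p : Fin n × Fin n, p.1 ≠ p.2 → Pr {ω | T p.1 ω = T p.2 ω} = 0 := by
    rintro ⟨i, j⟩ hij
    have hind2 : IndepFun (T i) (T j) Pr := hindep.indepFun hij
    have hmap2 : Pr.map (fun ω => (T i ω, T j ω)) = ν.prod ν := by
      rw [(indepFun_iff_map_prod_eq_prod_map_map (hmeas i).aemeasurable
        (hmeas j).aemeasurable).mp hind2, hmapeq i, hmapeq j]
    have hdiag : MeasurableSet {p : ℝ × ℝ | p.1 = p.2} :=
      measurableSet_eq_fun measurable_fst measurable_snd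
    have hset : {ω | T i ω = T j ω} =
        (fun ω => (T i ω, T j ω)) ⁻¹' {p : ℝ × ℝ | p.1 = p.2} := rfl
    rw [hset, ← Measure.map_apply ((hmeas i).prodMk (hmeas j)) hdiag, hmap2,
      Measure.prod_apply hdiag]
    have hν0 : ∀ a : ℝ, ν (Prod.mk a ⁻¹' {p : ℝ × ℝ | p.1 = p.2}) = 0 := by
      intro a
      have h1 : (Prod.mk a ⁻¹' {p : ℝ × ℝ | p.1 = p.2}) = {a} := by
        ext z; simp [eq_comm]
      rw [h1, hνdef]
      exact map_T_noatom Pr (hmeas _) hμ (hexp _) a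
    have h2 : ∀ a : ℝ, ν ({a} : Set ℝ) = 0 := fun a => by
      rw [hνdef]; exact map_T_noatom Pr (hmeas _) hμ (hexp _) a
    simp [hν0, h2]
  set N : Set Ω := ⋃ (p : Fin n × Fin n) (_ : p.1 ≠ p.2), {ω | T p.1 ω = T p.2 ω} with hN
  have hNnull : Pr N = 0 :=
    measure_iUnion_null fun p => measure_iUnion_null fun hp => hEqNull p hp
  have hNinj : ∀ ω, ω ∉ N → Function.Injective (fun i => T i ω) := by
    intro ω hω a b hab
    by_contra hne
    exact hω (Set.mem_iUnion.mpr ⟨(a, b), Set.mem_iUnion.mpr ⟨hne, hab⟩⟩)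
  have hTzero : ∀ i : Fin n, Pr {ω | T i ω ≤ 0} = 0 := by
    intro i
    have h1 : Pr {ω | (0:ℝ) < T i ω} = 1 := by rw [hexp i 0 le_rfl]; simp
    have h2 : {ω | T i ω ≤ 0} = {ω | (0:ℝ) < T i ω}ᶜ := by
      ext ω; simp [not_lt]
    have h3 : MeasurableSet {ω | (0:ℝ) < T i ω} :=
      measurableSet_lt measurable_const (hmeas i)
    rw [h2, measure_compl h3 (measure_ne_top _ _), h1, measure_univ, tsub_self]
  set Z : Set Ω := ⋃ i : Fin n, {ω | T i ω ≤ 0} with hZ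
  have hZnull : Pr Z = 0 := measure_iUnion_null hTzero
  -- each sep event has probability (choose n r)⁻¹
  have hPrDA : ∀ A ∈ P, Pr (J ⁻¹' D A) = ((n.choose r : ℝ≥0∞))⁻¹ := by
    have hAeq : ∀ A ∈ P, ∀ B ∈ P, Pr (J ⁻¹' D A) = Pr (J ⁻¹' D B) := by
      intro A hA B hB
      rw [hPrD, hPrD]
      exact pi_measure_sep_eq ν A B (by rw [hcardP A hA, hcardP B hB])
    have hmeasV : MeasurableSet (⋃ A ∈ P, J ⁻¹' D A) :=
      MeasurableSet.biUnion P.countable_toSet fun A _ => hJmeas (hDmeas A)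
    have hcover : Pr (⋃ A ∈ P, J ⁻¹' D A) = 1 := by
      rw [← prob_compl_eq_zero_iff hmeasV]
      refine measure_mono_null ?_ hNnull
      intro ω hω
      by_contra hωN
      apply hω
      have hinj : Function.Injective (fun i => T i ω) := hNinj ω hωN
      obtain ⟨A, hAcard, hAsep, -⟩ := exists_sep hr1 hrn hinj
      exact Set.mem_iUnion₂.mpr
        ⟨A, Finset.mem_powersetCard.mpr ⟨Finset.subset_univ _, hAcard⟩, hAsep⟩
    have hsum : ∑ A ∈ P, Pr (J ⁻¹' D A) = 1 := by
      rw [← measure_biUnion_finset hdisj fun A _ => hJmeas (hDmeas A)]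
      exact hcover
    intro A hA
    have hconst : ∑ B ∈ P, Pr (J ⁻¹' D B) = P.card • Pr (J ⁻¹' D A) := by
      rw [Finset.sum_congr rfl (fun B hB => hAeq B hB A hA), Finset.sum_const]
    have h1 : (↑(n.choose r) : ℝ≥0∞) * Pr (J ⁻¹' D A) = 1 := by
      rw [← hPcard, ← nsmul_eq_mul, ← hconst, hsum]
    have hC0 : ((n.choose r : ℕ) : ℝ≥0∞) ≠ 0 := by
      exact_mod_cast (Nat.choose_pos hrn).ne'
    calc Pr (J ⁻¹' D A)
        = ((n.choose r : ℝ≥0∞))⁻¹ * ((↑(n.choose r) : ℝ≥0∞) * Pr (J ⁻¹' D A)) := by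
          rw [← mul_assoc, ENNReal.inv_mul_cancel hC0 (by simp), one_mul]
      _ = ((n.choose r : ℝ≥0∞))⁻¹ := by rw [h1, mul_one]
  -- the bad sets
  have hsplit : (P.filter (fun A => Φ (fun i => decide (i ∉ A)) = false)).card
      + (P.filter (fun A => Φ (fun i => decide (i ∉ A)) = true)).card = n.choose r := by
    have hfc : P.filter (fun A => ¬ (Φ (fun i => decide (i ∉ A)) = false)) =
        P.filter (fun A => Φ (fun i => decide (i ∉ A)) = true) := by
      apply Finset.filter_congr
      intro A _
      simp [Bool.not_eq_false]
    rw [← hfc, ← hPcard,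
      Finset.card_filter_add_card_filter_not
        (p := fun A => Φ (fun i => decide (i ∉ A)) = false)]
  set bad := P.filter (fun A => Φ (fun i => decide (i ∉ A)) = false) with hbad
  set U : Set Ω := ⋃ A ∈ bad, J ⁻¹' D A with hU
  -- a.e. identification
  have hiff : ∀ ω, ω ∉ N → ω ∉ Z →
      ((failTime n Φ (fun i => T i ω) ≤
        orderStat n (fun i => T i ω) ⟨r - 1, by omega⟩) ↔ ω ∈ U) := by
    intro ω hωN hωZ
    have hinj : Function.Injective (fun i => T i ω) := hNinj ω hωN
    have hpos : ∀ i, 0 < T i ω := by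
      intro i
      by_contra h
      exact hωZ (Set.mem_iUnion.mpr ⟨i, not_lt.mp h⟩)
    set y : Fin n → ℝ := fun i => T i ω with hy
    obtain ⟨A₀, hA₀card, hA₀sep, hA₀mem⟩ := exists_sep hr1 hrn hinj
    set v := orderStat n y ⟨r - 1, by omega⟩ with hv
    have hv0 : 0 ≤ v := (hpos _).le
    have hstate : (fun i => decide (v < y i)) = (fun i => decide (i ∉ A₀)) := by
      funext i
      by_cases hiA : i ∈ A₀
      · simp [hiA, not_lt.mpr ((hA₀mem i).mp hiA)]
      · simp [hiA, lt_of_not_ge (fun hc => hiA ((hA₀mem i).mpr hc))]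
    have hA₀P : A₀ ∈ P := Finset.mem_powersetCard.mpr ⟨Finset.subset_univ _, hA₀card⟩
    rw [failTime_le_iff hmono hΦ0 hn y hv0, hstate]
    constructor
    · intro hfalse
      exact Set.mem_iUnion₂.mpr ⟨A₀, Finset.mem_filter.mpr ⟨hA₀P, hfalse⟩, hA₀sep⟩
    · intro hmemU
      obtain ⟨A, hA, hsep⟩ := Set.mem_iUnion₂.mp hmemU
      have hAbad := Finset.mem_filter.mp hA
      have hAA₀ : A = A₀ :=
        sep_unique hsep hA₀sep (by rw [hcardP A hAbad.1, hA₀card])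
      rw [← hAA₀]
      exact hAbad.2
  have hcongr : Pr {ω | failTime n Φ (fun i => T i ω) ≤
      orderStat n (fun i => T i ω) ⟨r - 1, by omega⟩} = Pr U := by
    apply measure_congr
    have haeN : ∀ᵐ ω ∂Pr, ω ∉ N := by
      rw [MeasureTheory.ae_iff]
      simpa using hNnull
    have haeZ : ∀ᵐ ω ∂Pr, ω ∉ Z := by
      rw [MeasureTheory.ae_iff]
      simpa using hZnull
    rw [Filter.eventuallyEq_set]
    filter_upwards [haeN, haeZ] with ω h1 h2
    exact hiff ω h1 h2
  have hbadsub : bad ⊆ P := Finset.filter_subset _ _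
  have hPrU : Pr U = (bad.card : ℝ≥0∞) * ((n.choose r : ℝ≥0∞))⁻¹ := by
    rw [hU, measure_biUnion_finset (hdisj.subset (by exact_mod_cast hbadsub))
      (fun A _ => hJmeas (hDmeas A))]
    rw [Finset.sum_congr rfl (fun A hA => hPrDA A (hbadsub hA)), Finset.sum_const,
      nsmul_eq_mul]
  -- counting
  set good := P.filter (fun A => Φ (fun i => decide (i ∉ A)) = true) with hgood
  have hC0' : (0:ℝ) < (n.choose r : ℝ) := by
    exact_mod_cast Nat.choose_pos hrn
  rw [hcongr, hPrU, sum_structSig r hr1, Sbar_zero hn hΦ1, Sbar_eq r]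
  rw [ENNReal.toReal_mul, ENNReal.toReal_inv]
  simp only [ENNReal.toReal_natCast]
  have hbc : (bad.card : ℝ) + (good.card : ℝ) = (n.choose r : ℝ) := by
    exact_mod_cast hsplit
  have hgc : (good.card : ℝ) = ((P.filter (fun A => Φ (fun i => decide (i ∉ A)) = true)).card : ℝ) := by
    rw [hgood]
  rw [← hgc]
  field_simp
  linarith
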